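/- Under the Bakhvalov-type mesh assumptions, there exists a constant C > 0 depending only on σ and α (not on ε or N) such that for every integer j with N/2+2 ≤ j ≤ N, every real λ with 0 ≤ λ ≤ σ, and every x ∈ I_j: h_j^λ · e^(−α(1−x)/ε) ≤ h_j^λ · e^(−α(1−x_j)/ε) ≤ C ε^λ N^(−λ). -/
import Mathlib


open Real

/-- Bakhvalov-type mesh generating function evaluated at `t = j/N`:
`ψ(t) = 2τt` for `t < 1/2` and `ψ(t) = 1 + (σε/α)·ln(1 + 2(1-ε)(t-1))` for `t ≥ 1/2`,
where `τ = 1 + (σε/α)·ln ε`. -/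
noncomputable def bX (α σ ε : ℝ) (N j : ℕ) : ℝ :=
  if (j : ℝ) / N < 1 / 2 then
    2 * (1 + σ * ε / α * Real.log ε) * ((j : ℝ) / N)
  else
    1 + σ * ε / α * Real.log (1 + 2 * (1 - ε) * ((j : ℝ) / N - 1))


/-- There is a constant `C > 0` depending only on `σ` and `α` such that
for `N/2+2 ≤ j ≤ N`, `0 ≤ λ ≤ σ` and `x ∈ I_j`,
`h_j^λ e^{−α(1−x)/ε} ≤ h_j^λ e^{−α(1−x_j)/ε} ≤ C ε^λ N^{−λ}`. -/
theorem statement6 (α σ : ℝ) (hα : 0 < α) (hσ : 0 < σ) :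
    ∃ C > (0:ℝ), ∀ ε : ℝ, 0 < ε → ε < 1 →
      ∀ N : ℕ, 4 ≤ N → Even N → ε ≤ (N : ℝ)⁻¹ →
        (1:ℝ) / 2 ≤ 1 + σ * ε / α * Real.log ε →
        ∀ j : ℕ, N / 2 + 2 ≤ j → j ≤ N →
          ∀ lam : ℝ, 0 ≤ lam → lam ≤ σ →
            ∀ x ∈ Set.Icc (bX α σ ε N (j - 1)) (bX α σ ε N j),
              (bX α σ ε N j - bX α σ ε N (j - 1)) ^ lam *
                  Real.exp (-(α * (1 - x)) / ε) ≤
                (bX α σ ε N j - bX α σ ε N (j - 1)) ^ lam *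
                  Real.exp (-(α * (1 - bX α σ ε N j)) / ε) ∧
              (bX α σ ε N j - bX α σ ε N (j - 1)) ^ lam *
                  Real.exp (-(α * (1 - bX α σ ε N j)) / ε) ≤
                C * ε ^ lam * (N : ℝ) ^ (-lam) := by
  refine ⟨(max 1 (4*σ/α)) ^ σ,
    Real.rpow_pos_of_pos (lt_of_lt_of_le one_pos (le_max_left _ _)) σ, ?_⟩
  intro ε hε hε1 N hN4 hNe hεN hτ j hj1 hj2 lam hlam0 hlamσ x hx
  obtain ⟨k, hk⟩ := hNe
  have hjk : k + 2 ≤ j := by omega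
  have hn : (0:ℝ) < N := by
    have : 0 < N := by omega
    exact_mod_cast this
  have hj1' : 1 ≤ j := by omega
  have hjc : ((j - 1 : ℕ) : ℝ) = (j:ℝ) - 1 := by
    rw [Nat.cast_sub hj1', Nat.cast_one]
  have hjl : (N:ℝ)/2 + 2 ≤ (j:ℝ) := by
    have h1 : (k:ℝ) + 2 ≤ (j:ℝ) := by exact_mod_cast hjk
    have h2 : (N:ℝ) = (k:ℝ) + (k:ℝ) := by exact_mod_cast hk
    linarith
  have hju : (j:ℝ) ≤ N := by exact_mod_cast hj2
  set A := 1 + 2*(1-ε)*((j:ℝ)/N - 1) with hAdef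
  set B := 1 + 2*(1-ε)*(((j:ℝ)-1)/N - 1) with hBdef
  clear_value A B
  have hxj : bX α σ ε N j = 1 + σ*ε/α * Real.log A := by
    simp only [bX]
    rw [if_neg, ← hAdef]
    push_neg
    rw [le_div_iff₀ hn]
    linarith
  have hxjm : bX α σ ε N (j-1) = 1 + σ*ε/α * Real.log B := by
    simp only [bX]
    rw [if_neg, hjc, ← hBdef]
    push_neg
    rw [hjc, le_div_iff₀ hn]
    linarith
  have hε1' : (0:ℝ) ≤ 1 - ε := by linarith
  have hAB : A - B = 2*(1-ε)/N := by
    rw [hAdef, hBdef]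
    field_simp
    ring
  have hBlow : ε + 2*(1-ε)/(N:ℝ) ≤ B := by
    have h1 : B - (ε + 2*(1-ε)/N) = (1-ε)*(2*(j:ℝ)-4-N)/N := by
      rw [hBdef]; field_simp; ring
    have h2 : 0 ≤ (1-ε)*(2*(j:ℝ)-4-N)/N :=
      div_nonneg (mul_nonneg hε1' (by linarith)) hn.le
    linarith
  have hB0 : 0 < B := by
    have h1 : 0 ≤ 2*(1-ε)/(N:ℝ) := div_nonneg (by linarith) hn.le
    linarith
  have hBA : B ≤ A := by
    have h1 : 0 ≤ 2*(1-ε)/(N:ℝ) := div_nonneg (by linarith) hn.le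
    linarith
  have hA0 : 0 < A := lt_of_lt_of_le hB0 hBA
  have hA1 : A ≤ 1 := by
    have h1 : (j:ℝ)/N ≤ 1 := (div_le_one hn).2 hju
    have h2 : 2*(1-ε)*((j:ℝ)/N - 1) ≤ 0 :=
      mul_nonpos_of_nonneg_of_nonpos (by linarith) (by linarith)
    rw [hAdef]; linarith
  have hA2B : A ≤ 2*B := by
    have h1 : 2*(1-ε)/(N:ℝ) ≤ B := le_trans (by linarith) hBlow
    linarith
  set h := bX α σ ε N j - bX α σ ε N (j-1) with hhdef
  have hh : h = σ*ε/α * (Real.log A - Real.log B) := by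
    rw [hhdef, hxj, hxjm]; ring
  clear_value h
  have hcoef : 0 ≤ σ*ε/α := by positivity
  have hlogAB : Real.log B ≤ Real.log A := Real.log_le_log hB0 hBA
  have hh0 : 0 ≤ h := by
    rw [hh]; exact mul_nonneg hcoef (by linarith)
  have hexpj : Real.exp (-(α * (1 - bX α σ ε N j)) / ε) = A ^ σ := by
    rw [Real.rpow_def_of_pos hA0, hxj]
    congr 1
    field_simp
    ring
  constructor
  · apply mul_le_mul_of_nonneg_left _ (Real.rpow_nonneg hh0 lam)
    apply Real.exp_le_exp.2
    rw [div_le_div_iff_of_pos_right hε]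
    nlinarith [hx.2, mul_le_mul_of_nonneg_left hx.2 hα.le]
  · rw [hexpj]
    have hkey : h * A ≤ 4*σ/α * (ε/N) := by
      have h1 : h ≤ σ*ε/α * ((A-B)/B) := by
        have hlog2 : Real.log A - Real.log B ≤ (A-B)/B := by
          rw [← Real.log_div hA0.ne' hB0.ne']
          have h3 := Real.log_le_sub_one_of_pos (div_pos hA0 hB0)
          rw [div_sub_one hB0.ne'] at h3
          exact h3
        rw [hh]
        exact mul_le_mul_of_nonneg_left hlog2 hcoef
      have h2 : h*A ≤ σ*ε/α * ((A-B)/B) * A :=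
        mul_le_mul_of_nonneg_right h1 hA0.le
      have h4 : (A-B) * (A/B) ≤ (2/N) * 2 := by
        apply mul_le_mul
        · rw [hAB]
          gcongr
          linarith
        · rw [div_le_iff₀ hB0]; linarith
        · positivity
        · positivity
      calc h*A ≤ σ*ε/α * ((A-B)*(A/B)) := by
            calc h*A ≤ σ*ε/α * ((A-B)/B) * A := h2
              _ = σ*ε/α * ((A-B)*(A/B)) := by ring
        _ ≤ σ*ε/α * ((2/N)*2) := mul_le_mul_of_nonneg_left h4 hcoef
        _ = 4*σ/α * (ε/N) := by ring
    calc h ^ lam * A ^ σ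
        ≤ h ^ lam * A ^ lam :=
          mul_le_mul_of_nonneg_left
            (Real.rpow_le_rpow_of_exponent_ge hA0 hA1 hlamσ)
            (Real.rpow_nonneg hh0 lam)
      _ = (h*A) ^ lam := (Real.mul_rpow hh0 hA0.le).symm
      _ ≤ (4*σ/α * (ε/N)) ^ lam :=
          Real.rpow_le_rpow (mul_nonneg hh0 hA0.le) hkey hlam0
      _ = (4*σ/α) ^ lam * (ε ^ lam * (N:ℝ) ^ (-lam)) := by
          rw [Real.mul_rpow (by positivity) (by positivity),
            Real.div_rpow hε.le hn.le, Real.rpow_neg hn.le]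
          ring
      _ ≤ (max 1 (4*σ/α)) ^ σ * ε ^ lam * (N:ℝ) ^ (-lam) := by
          have e1 : (4*σ/α) ^ lam ≤ (max 1 (4*σ/α)) ^ lam :=
            Real.rpow_le_rpow (by positivity) (le_max_right _ _) hlam0
          have e2 : (max 1 (4*σ/α)) ^ lam ≤ (max 1 (4*σ/α)) ^ σ :=
            Real.rpow_le_rpow_of_exponent_le (le_max_left _ _) hlamσ
          have e3 : 0 ≤ ε ^ lam * (N:ℝ)^(-lam) := by positivity
          rw [mul_assoc]
          exact mul_le_mul_of_nonneg_right (e1.trans e2) e3
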